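/- In a temporal election, a proportional outcome always exists: there is an outcome o (a choice of one project per timestep) such that every agent i gets utility at least ⌊μ_i/n⌋, where μ_i is the number of timesteps at which agent i approves at least one project. -/
import Mathlib


/-- The utility of agent `i` under outcome `o`: the number of timesteps at which
the selected project is approved by `i`. -/
noncomputable def util {P : Type*} {n ℓ : ℕ}
    (S : Fin n → Fin ℓ → Finset P) (i : Fin n) (o : Fin ℓ → P) : ℕ :=
  Nat.card {t : Fin ℓ // o t ∈ S i t}

/-- `μ_i`: the number of timesteps at which agent `i` approves at least one project. -/
noncomputable def mu {P : Type*} {n ℓ : ℕ}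
    (S : Fin n → Fin ℓ → Finset P) (i : Fin n) : ℕ :=
  Nat.card {t : Fin ℓ // S i t ≠ ∅}

/-- A proportional (PROP) outcome always exists: some outcome `o` gives every
agent `i` utility at least `⌊μ_i / n⌋`. -/
theorem prop_outcome_exists {P : Type*} [Fintype P] [Nonempty P] {n ℓ : ℕ}
    (hn : 1 ≤ n) (S : Fin n → Fin ℓ → Finset P) :
    ∃ o : Fin ℓ → P, ∀ i : Fin n, mu S i / n ≤ util S i o := by
  classical
  set D : Fin n → ℕ := fun i => mu S i / n with hD
  set T : Fin n → Finset (Fin ℓ) := fun i => Finset.univ.filter (fun t => S i t ≠ ∅) with hT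
  have hmuT : ∀ i, mu S i = (T i).card := by
    intro i
    simp [mu, Nat.card_eq_fintype_card, Fintype.card_subtype, hT]
  -- Hall's condition
  have hall : ∀ s : Finset (Σ i : Fin n, Fin (D i)),
      s.card ≤ (s.biUnion fun x => T x.1).card := by
    intro s
    rcases s.eq_empty_or_nonempty with rfl | hs
    · simp
    · set I : Finset (Fin n) := s.image Sigma.fst with hI
      have hIne : I.Nonempty := hs.image _
      obtain ⟨i0, hi0I, hi0max⟩ := I.exists_max_image (fun i => mu S i) hIne
      have h1 : s.card ≤ ∑ i ∈ I, D i := by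
        have hsub : s ⊆ I.sigma (fun i => (Finset.univ : Finset (Fin (D i)))) := by
          intro x hx
          simp only [Finset.mem_sigma, Finset.mem_univ, and_true, hI]
          exact Finset.mem_image_of_mem _ hx
        calc s.card ≤ (I.sigma (fun i => (Finset.univ : Finset (Fin (D i))))).card :=
              Finset.card_le_card hsub
          _ = ∑ i ∈ I, D i := by simp [Finset.card_sigma]
      have h2 : ∑ i ∈ I, D i ≤ I.card * D i0 := by
        apply Finset.sum_le_card_nsmul
        intro i hi
        exact Nat.div_le_div_right (hi0max i hi)
      have h3 : I.card * D i0 ≤ n * D i0 := by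
        apply Nat.mul_le_mul_right
        simpa using Finset.card_le_card (Finset.subset_univ I)
      have h4 : n * D i0 ≤ mu S i0 := by
        rw [hD]
        exact Nat.mul_div_le (mu S i0) n
      have h5 : (T i0).card ≤ (s.biUnion fun x => T x.1).card := by
        apply Finset.card_le_card
        obtain ⟨x, hxs, hx1⟩ := Finset.mem_image.mp hi0I
        subst hx1
        exact Finset.subset_biUnion_of_mem (fun x => T x.1) hxs
      calc s.card ≤ ∑ i ∈ I, D i := h1
        _ ≤ I.card * D i0 := h2
        _ ≤ n * D i0 := h3
        _ ≤ mu S i0 := h4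
        _ = (T i0).card := hmuT i0
        _ ≤ _ := h5
  obtain ⟨f, hfinj, hfmem⟩ :=
    (Finset.all_card_le_biUnion_card_iff_existsInjective' (fun x : Σ i : Fin n, Fin (D i) => T x.1)).mp hall
  have key : ∀ t (h : ∃ x : Σ i : Fin n, Fin (D i), f x = t), (S h.choose.1 t).Nonempty := by
    intro t h
    have := hfmem h.choose
    rw [h.choose_spec] at this
    rw [hT] at this
    simp only [Finset.mem_filter] at this
    exact Finset.nonempty_iff_ne_empty.mpr this.2
  set o : Fin ℓ → P := fun t =>
    if h : ∃ x : Σ i : Fin n, Fin (D i), f x = t then (key t h).choose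
    else Classical.arbitrary P with ho
  refine ⟨o, fun i => ?_⟩
  have hg : ∀ k : Fin (D i), o (f ⟨i, k⟩) ∈ S i (f ⟨i, k⟩) := by
    intro k
    have h : ∃ x : Σ i : Fin n, Fin (D i), f x = f ⟨i, k⟩ := ⟨⟨i, k⟩, rfl⟩
    have ho' : o (f ⟨i, k⟩) = (key _ h).choose := by rw [ho]; exact dif_pos h
    have hmem := (key _ h).choose_spec
    have hx : h.choose = ⟨i, k⟩ := hfinj h.choose_spec
    rw [ho']
    convert hmem using 2
    exact (congrArg Sigma.fst hx).symm
  have hinj : Function.Injective (fun k : Fin (D i) => (⟨f ⟨i, k⟩, hg k⟩ : {t : Fin ℓ // o t ∈ S i t})) := by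
    intro a b hab
    have : f ⟨i, a⟩ = f ⟨i, b⟩ := congrArg Subtype.val hab
    have h2 := hfinj this
    exact eq_of_heq (Sigma.mk.inj_iff.mp h2).2
  have : Fintype.card (Fin (D i)) ≤ Fintype.card {t : Fin ℓ // o t ∈ S i t} :=
    Fintype.card_le_of_injective _ hinj
  simpa [util, Nat.card_eq_fintype_card, hD] using this
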